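/- Let G be a graph, S a minimal separator, A a full component of S, and suppose x, y ∈ S are such that each of N(x) ∩ A and N(y) ∩ A is the union of a (disjoint) collection of maximal strong modules of G[A], where the quotient graph of G[A] by its maximal strong modules is a clique. Then A ∩ (N(x) \ N(y)) is complete to A ∩ (N(y) \ N(x)), i.e., every vertex of the first set is adjacent to every vertex of the second. -/

import Mathlib

open SimpleGraph Set

variable {V : Type*}

/-- Open neighborhood of a set: vertices outside `A` with a neighbor in `A`. -/
def nbhdSet (G : SimpleGraph V) (A : Set V) : Set V :=
  {v | v ∉ A ∧ ∃ u ∈ A, G.Adj u v}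

/-- Union of closed neighborhoods of vertices of `X`. -/
def closedNbhd (G : SimpleGraph V) (X : Set V) : Set V :=
  X ∪ {v | ∃ u ∈ X, G.Adj u v}

/-- `A` is a connected component of `G - S`. -/
def IsCompOutside (G : SimpleGraph V) (S A : Set V) : Prop :=
  A.Nonempty ∧ Disjoint A S ∧ (G.induce A).Connected ∧
    ∀ u ∈ A, ∀ v, v ∉ A → v ∉ S → ¬ G.Adj u v

/-- `A` is a full component of `G - S`, i.e. `N(A) = S`. -/
def IsFullComp (G : SimpleGraph V) (S A : Set V) : Prop :=
  IsCompOutside G S A ∧ nbhdSet G A = S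

/-- `S` is a minimal separator: it has at least two full components. -/
def IsMinSep (G : SimpleGraph V) (S : Set V) : Prop :=
  ∃ A B : Set V, A ≠ B ∧ IsFullComp G S A ∧ IsFullComp G S B

/-- `f` is an induced copy of the path on `k` vertices in `G`. -/
def IsInducedPathMap (G : SimpleGraph V) {k : ℕ} (f : Fin k ↪ V) : Prop :=
  ∀ i j : Fin k, G.Adj (f i) (f j) ↔ ((i : ℕ) + 1 = (j : ℕ) ∨ (j : ℕ) + 1 = (i : ℕ))

/-- `G` is `P_t`-free: no induced path on `t` vertices. -/
def PFree (t : ℕ) (G : SimpleGraph V) : Prop :=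
  ¬ ∃ f : Fin t ↪ V, IsInducedPathMap G f

/-- `Ω` is a potential maximal clique. -/
def IsPMC (G : SimpleGraph V) (Ω : Set V) : Prop :=
  (∀ D : Set V, IsCompOutside G Ω D → nbhdSet G D ≠ Ω) ∧
  (∀ u ∈ Ω, ∀ v ∈ Ω, u ≠ v → ¬ G.Adj u v →
    ∃ D : Set V, IsCompOutside G Ω D ∧ u ∈ nbhdSet G D ∧ v ∈ nbhdSet G D)

/-- `M` is a module of the induced subgraph `G[A]`. -/
def IsModuleOn (G : SimpleGraph V) (A M : Set V) : Prop :=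
  M ⊆ A ∧ ∀ x ∈ M, ∀ y ∈ M, ∀ z ∈ A \ M, (G.Adj x z ↔ G.Adj y z)

/-- `M` is a strong module of `G[A]`: a proper module overlapping no other module. -/
def IsStrongOn (G : SimpleGraph V) (A M : Set V) : Prop :=
  IsModuleOn G A M ∧ M ≠ A ∧
    ∀ M' : Set V, IsModuleOn G A M' → M ⊆ M' ∨ M' ⊆ M ∨ M ∩ M' = ∅

/-- `M` is a maximal strong module of `G[A]`. -/
def IsMaxStrongOn (G : SimpleGraph V) (A M : Set V) : Prop :=
  M.Nonempty ∧ IsStrongOn G A M ∧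
    ∀ M' : Set V, M'.Nonempty → IsStrongOn G A M' → M ⊆ M' → M' = M

/-- The quotient of `G[A]` by its maximal strong modules is a clique. -/
def QuoIsCliqueOn (G : SimpleGraph V) (A : Set V) : Prop :=
  ∀ M M' : Set V, IsMaxStrongOn G A M → IsMaxStrongOn G A M' → M ≠ M' →
    ∀ x ∈ M, ∀ y ∈ M', G.Adj x y


lemma exists_maxStrong [Fintype V] (G : SimpleGraph V) (A : Set V) (a : V)
    (haA : a ∈ A) (hne : ({a} : Set V) ≠ A) :
    ∃ M : Set V, IsMaxStrongOn G A M ∧ a ∈ M := by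
  classical
  set T : Set (Set V) := {M | a ∈ M ∧ IsStrongOn G A M} with hT
  have hsingle : ({a} : Set V) ∈ T := by
    refine ⟨rfl, ⟨⟨by simpa using haA, ?_⟩, hne, ?_⟩⟩
    · rintro u rfl v rfl z _; rfl
    · intro M' _
      by_cases h : a ∈ M'
      · exact Or.inl (by simpa using h)
      · refine Or.inr (Or.inr ?_)
        ext z; simp only [Set.mem_inter_iff, Set.mem_singleton_iff, Set.mem_empty_iff_false,
          iff_false, not_and]
        rintro rfl; exact h
  have hTfin : T.Finite := Set.toFinite T
  obtain ⟨M, hM, hmax⟩ := hTfin.exists_maximalFor (fun M => M.ncard) T ⟨_, hsingle⟩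
  refine ⟨M, ⟨⟨a, hM.1⟩, hM.2, ?_⟩, hM.1⟩
  intro M' hM'ne hM'str hsub
  have hM'T : M' ∈ T := ⟨hsub hM.1, hM'str⟩
  have hcard : M.ncard ≤ M'.ncard := Set.ncard_le_ncard hsub (Set.toFinite _)
  have := le_antisymm hcard (hmax hM'T hcard)
  exact (Set.eq_of_subset_of_ncard_le hsub (le_of_eq this.symm) (Set.toFinite _)).symm

/-- Claim 4 (`cl:edge`): if `N(x) ∩ A` and `N(y) ∩ A` are unions of maximal strong
modules of `G[A]` and the quotient of `G[A]` is a clique, then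
`A ∩ (N(x) \ N(y))` is complete to `A ∩ (N(y) \ N(x))`. -/
theorem stmt_14 [Fintype V] (G : SimpleGraph V) (S A : Set V)
    (hS : IsMinSep G S) (hA : IsFullComp G S A) (x y : V) (hx : x ∈ S) (hy : y ∈ S)
    (hquo : QuoIsCliqueOn G A)
    (hxmod : ∀ M : Set V, IsMaxStrongOn G A M →
      M ⊆ G.neighborSet x ∨ M ∩ G.neighborSet x = ∅)
    (hymod : ∀ M : Set V, IsMaxStrongOn G A M →
      M ⊆ G.neighborSet y ∨ M ∩ G.neighborSet y = ∅) :
    ∀ a ∈ A ∩ (G.neighborSet x \ G.neighborSet y),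
      ∀ b ∈ A ∩ (G.neighborSet y \ G.neighborSet x), G.Adj a b := by
  rintro a ⟨haA, hax, hay⟩ b ⟨hbA, hby, hbx⟩
  rw [SimpleGraph.mem_neighborSet] at hax hby
  rw [SimpleGraph.mem_neighborSet] at hay hbx
  have hab : a ≠ b := by rintro rfl; exact hbx hax
  obtain ⟨Ma, hMa, haMa⟩ := exists_maxStrong G A a haA
    (by intro h; exact hab (by have := h ▸ hbA; simpa using this.symm))
  obtain ⟨Mb, hMb, hbMb⟩ := exists_maxStrong G A b hbA
    (by intro h; exact hab (by have := h ▸ haA; simpa using this))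
  have hMax : Ma ⊆ G.neighborSet x := by
    rcases hxmod Ma hMa with h | h
    · exact h
    · exact absurd (Set.eq_empty_iff_forall_notMem.mp h a ⟨haMa, hax⟩) not_false
  have hMby : Mb ⊆ G.neighborSet y := by
    rcases hymod Mb hMb with h | h
    · exact h
    · exact absurd (Set.eq_empty_iff_forall_notMem.mp h b ⟨hbMb, hby⟩) not_false
  have hne : Ma ≠ Mb := by
    rintro rfl
    exact hbx (hMax hbMb)
  exact hquo Ma Mb hMa hMb hne a haMa b hbMb
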